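/- Let N, R_r, S, K_c be positive integers with S < K_c ≤ R_r and S + 1 ≤ R_r, and let 𝒟 ⊆ {1,…,N} with |𝒟| ≤ N − (R_r − S − 1) − K_c. Consider the set of vectors d : {1,…,N} → ℝ that are nonnegative, satisfy d(n) ≤ 1/K_c for all n ∈ {1,…,S}∖𝒟, and satisfy ∑_{n ∈ ({1,…,N}∖𝒟)∖X} d(n) ≥ 1 for every X ⊆ {1,…,N}∖𝒟 with |X| = R_r − S − 1. Then the minimum over this set of ∑_{n ∈ {1,…,N}∖𝒟} d(n) exists and equals (N − |𝒟|)/(N − |𝒟| − R_r + S + 1); in particular, the constant vector with d(n) = 1/(N − |𝒟| − R_r + S + 1) for all n ∈ {1,…,N}∖𝒟 (and 0 elsewhere) is feasible and attains this value. -/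
import Mathlib


/-- Feasibility predicate of the download-cost linear program of Theorem 1
(with `Ω = R_r - S - 1`). -/
def DownloadFeasible (N R_r S K_c : ℕ) (𝒟 : Finset ℕ) (d : ℕ → ℝ) : Prop :=
  (∀ n ∈ Finset.Icc 1 N, 0 ≤ d n) ∧
  (∀ n ∈ Finset.Icc 1 S \ 𝒟, d n ≤ 1 / (K_c : ℝ)) ∧
  (∀ X ⊆ Finset.Icc 1 N \ 𝒟, X.card = R_r - S - 1 →
    1 ≤ ∑ n ∈ (Finset.Icc 1 N \ 𝒟) \ X, d n)

/-- In the regime `|𝒟| ≤ N - (R_r - S - 1) - K_c`, the minimum of the download-cost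
linear program exists and equals `(N - |𝒟|)/(N - |𝒟| - R_r + S + 1)`; moreover the
constant vector `d(n) = 1/(N - |𝒟| - R_r + S + 1)` on `{1,…,N} ∖ 𝒟` (and `0` elsewhere)
is feasible and attains this value. -/
theorem stmt_7 (N R_r S K_c : ℕ) (hN : 0 < N) (hR : 0 < R_r) (hS : 0 < S) (hK : 0 < K_c)
    (hSK : S < K_c) (hKR : K_c ≤ R_r) (hSR : S + 1 ≤ R_r)
    (𝒟 : Finset ℕ) (h𝒟 : 𝒟 ⊆ Finset.Icc 1 N)
    (hcard : 𝒟.card + (R_r - S - 1) + K_c ≤ N) :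
    IsLeast
      { s : ℝ | ∃ d : ℕ → ℝ, DownloadFeasible N R_r S K_c 𝒟 d ∧
          s = ∑ n ∈ Finset.Icc 1 N \ 𝒟, d n }
      (((N : ℝ) - 𝒟.card) / ((N : ℝ) - 𝒟.card - R_r + S + 1)) ∧
    DownloadFeasible N R_r S K_c 𝒟
      (fun n => if n ∈ Finset.Icc 1 N \ 𝒟 then
        1 / ((N : ℝ) - 𝒟.card - R_r + S + 1) else 0) ∧
    ∑ n ∈ Finset.Icc 1 N \ 𝒟,
        (if n ∈ Finset.Icc 1 N \ 𝒟 then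
          1 / ((N : ℝ) - 𝒟.card - R_r + S + 1) else 0) =
      ((N : ℝ) - 𝒟.card) / ((N : ℝ) - 𝒟.card - R_r + S + 1) := by
  classical
  set T : Finset ℕ := Finset.Icc 1 N \ 𝒟 with hT
  set Ω : ℕ := R_r - S - 1 with hΩ
  have hcardIcc : (Finset.Icc 1 N).card = N := by simp
  have hm : T.card = N - 𝒟.card := by rw [hT, Finset.card_sdiff_of_subset h𝒟, hcardIcc]
  set m : ℕ := T.card with hmdef
  have h𝒟N : 𝒟.card ≤ N := hcardIcc ▸ Finset.card_le_card h𝒟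
  have hΩKm : Ω + K_c ≤ m := by omega
  have hΩm : Ω < m := by omega
  have hmΩK : K_c ≤ m - Ω := by omega
  have hden : (N : ℝ) - 𝒟.card - R_r + S + 1 = ((m - Ω : ℕ) : ℝ) := by
    have h1 : m - Ω + 𝒟.card + R_r = N + S + 1 := by omega
    have h2 := congrArg (Nat.cast : ℕ → ℝ) h1
    push_cast at h2
    linarith
  have hmcast : ((m : ℕ) : ℝ) = (N : ℝ) - 𝒟.card := by
    have h1 := congrArg (Nat.cast : ℕ → ℝ) (by omega : m + 𝒟.card = N)
    push_cast at h1
    linarith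
  have hpos : (0 : ℝ) < ((m - Ω : ℕ) : ℝ) := by exact_mod_cast (by omega : 0 < m - Ω)
  -- feasibility of the constant vector
  have hfeas : DownloadFeasible N R_r S K_c 𝒟
      (fun n => if n ∈ T then 1 / ((N : ℝ) - 𝒟.card - R_r + S + 1) else 0) := by
    rw [hden]
    refine ⟨?_, ?_, ?_⟩
    · intro n _
      dsimp only
      split
      · positivity
      · exact le_rfl
    · intro n hn
      have hnT : n ∈ T := by
        rw [Finset.mem_sdiff] at hn ⊢
        refine ⟨Finset.mem_Icc.mpr ⟨(Finset.mem_Icc.mp hn.1).1, ?_⟩, hn.2⟩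
        exact le_trans (Finset.mem_Icc.mp hn.1).2 (by omega)
      simp only [hnT, if_pos]
      apply one_div_le_one_div_of_le
      · exact_mod_cast hK
      · exact_mod_cast hmΩK
    · intro X hX hXc
      have hTX : (T \ X).card = m - Ω := by rw [Finset.card_sdiff_of_subset hX, hXc]
      have : ∑ n ∈ T \ X, (if n ∈ T then 1 / ((m - Ω : ℕ) : ℝ) else 0)
          = ∑ _n ∈ T \ X, 1 / ((m - Ω : ℕ) : ℝ) :=
        Finset.sum_congr rfl fun n hn => if_pos (Finset.mem_sdiff.mp hn).1
      rw [this, Finset.sum_const, hTX, nsmul_eq_mul, mul_one_div, div_self hpos.ne']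
  have hsum : ∑ n ∈ T, (if n ∈ T then 1 / ((N : ℝ) - 𝒟.card - R_r + S + 1) else 0)
      = ((N : ℝ) - 𝒟.card) / ((N : ℝ) - 𝒟.card - R_r + S + 1) := by
    rw [hden, ← hmcast]
    rw [Finset.sum_congr rfl fun n hn => if_pos hn, Finset.sum_const, nsmul_eq_mul,
      mul_one_div]
  refine ⟨⟨⟨_, hfeas, hsum.symm⟩, ?_⟩, hfeas, hsum⟩
  -- lower bound
  rintro s ⟨d, ⟨hd0, hd1, hd2⟩, rfl⟩
  rw [hden, ← hmcast]
  have hd0T : ∀ n ∈ T, 0 ≤ d n := fun n hn => hd0 n (Finset.mem_sdiff.mp hn).1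
  -- averaging argument
  have key : ∀ n ∈ T, ((T.powersetCard Ω).filter (fun X => n ∉ X))
      = (T.erase n).powersetCard Ω := by
    intro n hn
    ext X
    simp only [Finset.mem_filter, Finset.mem_powersetCard, Finset.subset_erase]
    tauto
  have swap : ∑ X ∈ T.powersetCard Ω, ∑ n ∈ T \ X, d n
      = (((m - 1).choose Ω : ℕ) : ℝ) * ∑ n ∈ T, d n := by
    have step1 : ∀ X ∈ T.powersetCard Ω,
        ∑ n ∈ T \ X, d n = ∑ n ∈ T, if n ∉ X then d n else 0 := by
      intro X _
      rw [Finset.sdiff_eq_filter, Finset.sum_filter]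
    rw [Finset.sum_congr rfl step1, Finset.sum_comm, Finset.mul_sum]
    refine Finset.sum_congr rfl fun n hn => ?_
    rw [← Finset.sum_filter, key n hn, Finset.sum_const, Finset.card_powersetCard,
      Finset.card_erase_of_mem hn, nsmul_eq_mul]
  have lb : ((m.choose Ω : ℕ) : ℝ) ≤ ∑ X ∈ T.powersetCard Ω, ∑ n ∈ T \ X, d n := by
    have h1 : ((m.choose Ω : ℕ) : ℝ) = ∑ _X ∈ T.powersetCard Ω, (1 : ℝ) := by
      rw [Finset.sum_const, Finset.card_powersetCard, nsmul_eq_mul, mul_one]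
    rw [h1]
    refine Finset.sum_le_sum fun X hX => ?_
    obtain ⟨hXs, hXc⟩ := Finset.mem_powersetCard.mp hX
    exact hd2 X hXs hXc
  rw [swap] at lb
  have hid : (m - 1).choose Ω * m = m.choose Ω * (m - Ω) := by
    have h := Nat.choose_mul_succ_eq (m - 1) Ω
    have hm1 : m - 1 + 1 = m := by omega
    rw [hm1] at h
    omega
  have hidR : (((m - 1).choose Ω : ℕ) : ℝ) * m = ((m.choose Ω : ℕ) : ℝ) * ((m - Ω : ℕ) : ℝ) := by
    exact_mod_cast hid
  have hcΩ : (0 : ℝ) < (((m - 1).choose Ω : ℕ) : ℝ) := by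
    exact_mod_cast Nat.choose_pos (by omega : Ω ≤ m - 1)
  rw [div_le_iff₀ hpos]
  nlinarith [mul_le_mul_of_nonneg_right lb hpos.le, hcΩ, hidR]
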